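/- With θ defined by sin θ = 1/√(2ⁿ) and θ ∈ (0, π/2), after L applications of the Grover iteration to the uniform superposition, the probability of observing the marked basis state |a⟩ equals sin²((2L+1)θ); in particular, for n ≥ 2 and L = 1 this probability strictly exceeds the initial probability 1/2ⁿ. -/

import Mathlib

local notation "⟪" x ", " y "⟫" => @inner ℂ _ _ x y

private lemma trig1 (A t : ℝ) :
    Real.sin (A + 2*t) = Real.sin A + 2 * Real.sin t * Real.cos (A + t) := by
  have h : Real.sin A = Real.sin (A+t) * Real.cos t - Real.cos (A+t) * Real.sin t := by
    rw [← Real.sin_sub]; ring_nf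
  rw [show A + 2*t = (A+t) + t by ring, Real.sin_add, h]; ring

private lemma trig2 (A t : ℝ) :
    Real.cos (A + 3*t) =
      Real.cos (A+t) - 2*Real.sin t*Real.sin A - 4*Real.sin t^2*Real.cos (A+t) := by
  have h : Real.sin A = Real.sin (A+t) * Real.cos t - Real.cos (A+t) * Real.sin t := by
    rw [← Real.sin_sub]; ring_nf
  have hp := Real.sin_sq_add_cos_sq t
  rw [show A + 3*t = (A+t) + (t+t) by ring, Real.cos_add, Real.sin_add t t, Real.cos_add t t, h]
  linear_combination Real.cos (A+t) * hp


theorem grover_success_probability (n : ℕ) (a : Fin (2 ^ n)) :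
    let E := EuclideanSpace ℂ (Fin (2 ^ n))
    let ea : E := EuclideanSpace.single a (1 : ℂ)
    let a₀ : E := WithLp.toLp 2 (fun _ => ((1 / Real.sqrt (2 ^ n) : ℝ) : ℂ))
    let Ua : E → E := fun v => v - (2 : ℂ) • (⟪ea, v⟫ • ea)
    let Ua₀ : E → E := fun v => (2 : ℂ) • (⟪a₀, v⟫ • a₀) - v
    let UGrov : E → E := fun v => Ua₀ (Ua v)
    let θ : ℝ := Real.arcsin (1 / Real.sqrt (2 ^ n))
    (∀ L : ℕ, ‖(⟪ea, UGrov^[L] a₀⟫)‖ ^ 2 =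
        Real.sin ((2 * L + 1) * θ) ^ 2) ∧
    (2 ≤ n → Real.sin ((2 * 1 + 1) * θ) ^ 2 > 1 / 2 ^ n) := by
  intro E ea a₀ Ua Ua₀ UGrov θ
  constructor
  · by_cases hn0 : n = 0
    · subst hn0
      have hθ : θ = Real.pi / 2 := by
        simp only [θ]; norm_num [Real.sqrt_one, Real.arcsin_one]
      have hea : ea = a₀ := by
        ext i
        have hia : i = a := by
          apply Fin.ext
          have h1 := i.isLt
          have h2 := a.isLt
          simp only [pow_zero] at h1 h2
          omega
        simp only [ea, a₀, hia, EuclideanSpace.single_apply, if_pos rfl]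
        norm_num
      have ha₀ : ⟪a₀, a₀⟫ = 1 := by
        simp only [E, a₀, PiLp.inner_apply, RCLike.inner_apply]
        norm_num [Finset.sum_const, Fintype.card_fin]
      have hneg : ∀ v : E, UGrov v = -v := by
        intro v
        simp only [UGrov, Ua, Ua₀, hea]
        rw [inner_sub_right, inner_smul_right, inner_smul_right, ha₀]
        module
      have hiter : ∀ L : ℕ, UGrov^[L] a₀ = ((-1:ℂ)^L) • a₀ := by
        intro L
        induction L with
        | zero => simp
        | succ L ih =>
            rw [Function.iterate_succ_apply', ih, hneg, pow_succ]
            module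
      intro L
      rw [hiter, hea, inner_smul_right, ha₀, mul_one]
      have habs : ‖(-1:ℂ)^L‖ = 1 := by
        rw [norm_pow]; simp
      rw [habs, hθ]
      have hcos : Real.cos ((2*(L:ℝ)+1)*(Real.pi/2)) = 0 := by
        rw [show (2*(L:ℝ)+1)*(Real.pi/2) = Real.pi/2 + L*Real.pi by ring, Real.cos_add]
        simp [Real.sin_nat_mul_pi]
      have hpyth := Real.sin_sq_add_cos_sq ((2*(L:ℝ)+1)*(Real.pi/2))
      rw [hcos] at hpyth
      nlinarith [hpyth]

    ·
      have hn1 : 1 ≤ n := Nat.one_le_iff_ne_zero.mpr hn0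
      have h2n : (2:ℝ) ≤ 2^n := by
        calc (2:ℝ) = 2^1 := (pow_one 2).symm
        _ ≤ 2^n := by exact pow_le_pow_right₀ (by norm_num) hn1
      have hNpos : (0:ℝ) < 2^n := by positivity
      have hsqrt_pos : 0 < Real.sqrt (2^n) := Real.sqrt_pos.mpr hNpos
      set s : ℝ := 1 / Real.sqrt (2^n) with hs_def
      have hs_pos : 0 < s := by positivity
      have hs_sq : s^2 = 1/2^n := by
        rw [hs_def, div_pow, one_pow, Real.sq_sqrt hNpos.le]
      have hs2_lt : s^2 < 1 := by
        rw [hs_sq, div_lt_one hNpos]; linarith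
      have hs_le1 : s ≤ 1 := by nlinarith [hs2_lt, hs_pos]
      have hθ : θ = Real.arcsin s := rfl
      have hsin : Real.sin θ = s := by rw [hθ]; exact Real.sin_arcsin (by linarith) hs_le1
      set c : ℝ := Real.cos θ with hc_def
      have hcos : c = Real.sqrt (1 - s^2) := by rw [hc_def, hθ, Real.cos_arcsin]
      have hc_pos : 0 < c := by rw [hcos]; exact Real.sqrt_pos.mpr (by linarith)
      have hNs : (2^n : ℝ) * s^2 = 1 := by rw [hs_sq]; field_simp
      have hNsC : ((2^n : ℕ) : ℂ) * (s:ℂ)^2 = 1 := by exact_mod_cast hNs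
      -- inner products
      have hinner_ea : ∀ v : E, ⟪ea, v⟫ = v a := by
        intro v
        simp only [E, ea]
        rw [EuclideanSpace.inner_single_left]
        simp
      have hinner_a₀ : ∀ p q : ℝ,
          ⟪a₀, (WithLp.toLp 2 (fun i => (p:ℂ) * (if i = a then 1 else 0) + (q:ℂ) * (s:ℂ)) : E)⟫
            = (s:ℂ) * (p:ℂ) + (q:ℂ) := by
        intro p q
        simp only [E, a₀, PiLp.inner_apply, RCLike.inner_apply]
        rw [← hs_def]
        have hsum : ∑ i : Fin (2^n), ((p:ℂ) * (if i = a then 1 else 0) + (q:ℂ) * (s:ℂ))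
            = (p:ℂ) + ((2^n : ℕ) : ℂ) * ((q:ℂ) * (s:ℂ)) := by
          rw [Finset.sum_add_distrib, ← Finset.mul_sum, Finset.sum_const]
          simp [Finset.sum_ite_eq', Fintype.card_fin]
        calc ∑ i : Fin (2^n), ((p:ℂ) * (if i = a then 1 else 0) + (q:ℂ) * (s:ℂ)) * (starRingEnd ℂ) ((s:ℝ):ℂ)
            = (s:ℂ) * ∑ i : Fin (2^n), ((p:ℂ) * (if i = a then 1 else 0) + (q:ℂ) * (s:ℂ)) := by
              rw [← Finset.sum_mul, Complex.conj_ofReal, mul_comm]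
          _ = (s:ℂ) * ((p:ℂ) + ((2^n : ℕ) : ℂ) * ((q:ℂ) * (s:ℂ))) := by rw [hsum]
          _ = (s:ℂ) * (p:ℂ) + (q:ℂ) := by linear_combination (q:ℂ) * hNsC
      -- action of Ua on vec p q
      have hUa : ∀ p q : ℝ,
          Ua (WithLp.toLp 2 (fun i => (p:ℂ) * (if i = a then 1 else 0) + (q:ℂ) * (s:ℂ)) : E)
            = (WithLp.toLp 2 (fun i => ((-p - 2*s*q : ℝ):ℂ) * (if i = a then 1 else 0) + (q:ℂ) * (s:ℂ)) : E) := by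
        intro p q
        ext i
        simp only [Ua, hinner_ea]
        simp only [E, ea, PiLp.sub_apply, PiLp.smul_apply, EuclideanSpace.single_apply,
          smul_eq_mul]
        by_cases hi : i = a <;> push_cast <;> simp [hi] <;> ring
      have hUa₀ : ∀ p q : ℝ,
          Ua₀ (WithLp.toLp 2 (fun i => (p:ℂ) * (if i = a then 1 else 0) + (q:ℂ) * (s:ℂ)) : E)
            = (WithLp.toLp 2 (fun i => ((-p : ℝ):ℂ) * (if i = a then 1 else 0) + ((2*s*p + q : ℝ):ℂ) * (s:ℂ)) : E) := by
        intro p q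
        ext i
        simp only [Ua₀]
        rw [hinner_a₀ p q]
        simp only [E, a₀, PiLp.sub_apply, PiLp.smul_apply, smul_eq_mul]
        rw [← hs_def]
        by_cases hi : i = a <;> push_cast <;> simp [hi] <;> ring
      have hstep : ∀ p q : ℝ,
          UGrov (WithLp.toLp 2 (fun i => (p:ℂ) * (if i = a then 1 else 0) + (q:ℂ) * (s:ℂ)) : E)
            = (WithLp.toLp 2 (fun i => ((p + 2*s*q : ℝ):ℂ) * (if i = a then 1 else 0)
                + ((q - 2*s*p - 4*s^2*q : ℝ):ℂ) * (s:ℂ)) : E) := by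
        intro p q
        simp only [UGrov]
        rw [hUa p q, hUa₀ (-p - 2*s*q) q]
        ext i
        push_cast
        ring
      -- the key induction
      have key : ∀ L : ℕ, UGrov^[L] a₀
          = (WithLp.toLp 2 (fun i => ((Real.sin (2*(L:ℝ)*θ)/c : ℝ):ℂ) * (if i = a then 1 else 0)
              + ((Real.cos ((2*(L:ℝ)+1)*θ)/c : ℝ):ℂ) * (s:ℂ)) : E) := by
        intro L
        induction L with
        | zero =>
          simp only [Function.iterate_zero, id_eq]
          ext i
          simp only [E, a₀]
          rw [← hs_def]
          have h0 : Real.sin (2*((0:ℕ):ℝ)*θ)/c = 0 := by norm_num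
          have h1 : Real.cos ((2*((0:ℕ):ℝ)+1)*θ)/c = 1 := by
            norm_num
            rw [← hc_def]
            exact div_self hc_pos.ne'
          rw [h0, h1]
          push_cast
          ring
        | succ L ih =>
          rw [Function.iterate_succ_apply', ih, hstep]
          have e1 : Real.sin (2*(L:ℝ)*θ)/c + 2*s*(Real.cos ((2*(L:ℝ)+1)*θ)/c)
              = Real.sin (2*((L+1:ℕ):ℝ)*θ)/c := by
            have h := trig1 (2*(L:ℝ)*θ) θ
            rw [hsin] at h
            push_cast
            rw [show 2*((L:ℝ)+1)*θ = 2*(L:ℝ)*θ + 2*θ by ring,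
              show (2*(L:ℝ)+1)*θ = 2*(L:ℝ)*θ + θ by ring, h]
            ring
          have e2 : Real.cos ((2*(L:ℝ)+1)*θ)/c - 2*s*(Real.sin (2*(L:ℝ)*θ)/c)
                - 4*s^2*(Real.cos ((2*(L:ℝ)+1)*θ)/c)
              = Real.cos ((2*((L+1:ℕ):ℝ)+1)*θ)/c := by
            have h := trig2 (2*(L:ℝ)*θ) θ
            rw [hsin] at h
            push_cast
            rw [show (2*((L:ℝ)+1)+1)*θ = 2*(L:ℝ)*θ + 3*θ by ring,
              show (2*(L:ℝ)+1)*θ = 2*(L:ℝ)*θ + θ by ring, h]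
            ring
          rw [← e1, ← e2]
      -- conclude
      intro L
      rw [key L, hinner_ea]
      have hval : Real.sin (2*(L:ℝ)*θ)/c + (Real.cos ((2*(L:ℝ)+1)*θ)/c) * s
          = Real.sin ((2*(L:ℝ)+1)*θ) := by
        have h := Real.sin_sub ((2*(L:ℝ)+1)*θ) θ
        rw [show (2*(L:ℝ)+1)*θ - θ = 2*(L:ℝ)*θ by ring, hsin] at h
        rw [h, ← hc_def, sub_div, mul_div_cancel_right₀ _ hc_pos.ne']
        ring
      have habs : (((Real.sin (2*(L:ℝ)*θ)/c : ℝ):ℂ) * (if a = a then 1 else 0)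
          + ((Real.cos ((2*(L:ℝ)+1)*θ)/c : ℝ):ℂ) * (s:ℂ))
          = ((Real.sin ((2*(L:ℝ)+1)*θ) : ℝ) : ℂ) := by
        rw [if_pos rfl, mul_one, ← Complex.ofReal_mul, ← Complex.ofReal_add, hval]
      rw [PiLp.toLp_apply]
      beta_reduce
      rw [habs, Complex.norm_real, Real.norm_eq_abs, sq_abs]

  · intro hn
    have hθ : θ = Real.arcsin (1 / Real.sqrt (2^n)) := rfl
    rw [hθ]
    have hNpos : (0:ℝ) < 2^n := by positivity
    have h4 : (4:ℝ) ≤ 2^n := by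
      calc (4:ℝ) = 2^2 := by norm_num
      _ ≤ 2^n := by exact pow_le_pow_right₀ (by norm_num) hn
    have hsqrt_pos : 0 < Real.sqrt (2^n) := Real.sqrt_pos.mpr hNpos
    set s : ℝ := 1 / Real.sqrt (2^n) with hs_def
    have hs_pos : 0 < s := by positivity
    have hs_sq : s^2 = 1/2^n := by
      rw [hs_def, div_pow, one_pow, Real.sq_sqrt hNpos.le]
    have hu4 : s^2 ≤ 1/4 := by rw [hs_sq]; rw [div_le_div_iff₀ hNpos (by norm_num)]; linarith
    have hs_le1 : s ≤ 1 := by nlinarith [hu4, hs_pos]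
    have hsin : Real.sin (Real.arcsin s) = s := Real.sin_arcsin (by linarith) hs_le1
    have h3 : (2*1+1 : ℝ) * Real.arcsin s = 3 * Real.arcsin s := by ring
    rw [h3, Real.sin_three_mul, hsin]
    nlinarith [sq_nonneg s, sq_nonneg (1 - 2*s^2), hs_pos, hs_sq, mul_pos hs_pos hs_pos]
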